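/- Let r, s ∈ H_n be strongly distinct hyperbolic vectors (r_t ≠ s_t for all t = 1,2,3), and let f_r, f_s be r-functions with parameters r and s respectively. Then the pointwise product f_r · f_s is again an r-function with parameter given componentwise by max(r_t, s_t). -/

import Mathlib

open MeasureTheory

/-- The Haar function of the dyadic interval `[a/2^k, (a+1)/2^k)`:
`-1` on the left half, `+1` on the right half, `0` outside. -/
noncomputable def haarFn (k a : ℕ) (x : ℝ) : ℝ :=
  if x ∈ Set.Ico ((a : ℝ) / 2 ^ k) ((2 * a + 1) / 2 ^ (k + 1)) then -1
  else if x ∈ Set.Ico (((2 * a : ℝ) + 1) / 2 ^ (k + 1)) (((a : ℝ) + 1) / 2 ^ k) then 1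
  else 0


/-- The three-dimensional Haar function of the dyadic rectangle indexed by `(r, a)`. -/
noncomputable def haarFn3 (r a : Fin 3 → ℕ) (x : Fin 3 → ℝ) : ℝ :=
  ∏ t, haarFn (r t) (a t) (x t)

/-- The `r`-function with parameter `r` and signs `α`:
`f_r = ∑_{R ∈ D³_r} α(R) h_R`, the sum running over all dyadic rectangles with
`t`-th side length `2^{-r t}`. -/
noncomputable def rFunction (r : Fin 3 → ℕ) (α : (Fin 3 → ℕ) → ℝ) (x : Fin 3 → ℝ) : ℝ :=
  ∑ a ∈ Fintype.piFinset (fun t => Finset.range (2 ^ r t)), α a * haarFn3 r a x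

/-- The sign of the level-`k` Haar function at `x` (valid for `x ∈ [0,1)`). -/
noncomputable def eps (k : ℕ) (x : ℝ) : ℝ :=
  if ⌊(2:ℝ) ^ (k + 1) * x⌋₊ % 2 = 0 then -1 else 1

lemma eps_pm (k : ℕ) (x : ℝ) : eps k x = 1 ∨ eps k x = -1 := by
  unfold eps; split <;> simp

lemma haarFn_eq (k a : ℕ) (x : ℝ) (hx : 0 ≤ x) :
    haarFn k a x =
      if ⌊(2:ℝ) ^ (k + 1) * x⌋₊ = 2 * a then -1
      else if ⌊(2:ℝ) ^ (k + 1) * x⌋₊ = 2 * a + 1 then 1 else 0 := by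
  have h2 : (0:ℝ) < 2 ^ (k + 1) := by positivity
  have h2' : (0:ℝ) < 2 ^ k := by positivity
  have hy : 0 ≤ (2:ℝ) ^ (k + 1) * x := by positivity
  have h1 : x ∈ Set.Ico ((a : ℝ) / 2 ^ k) ((2 * a + 1) / 2 ^ (k + 1)) ↔
      ⌊(2:ℝ) ^ (k + 1) * x⌋₊ = 2 * a := by
    rw [Nat.floor_eq_iff hy, Set.mem_Ico, div_le_iff₀ h2', lt_div_iff₀ h2]
    constructor
    · rintro ⟨hl, hr⟩
      constructor
      · push_cast; rw [pow_succ]; nlinarith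
      · push_cast; nlinarith
    · rintro ⟨hl, hr⟩
      constructor
      · rw [mul_comm]; push_cast at hl ⊢; rw [pow_succ] at hl; nlinarith
      · rw [mul_comm]; push_cast at hr ⊢; nlinarith
  have h2i : x ∈ Set.Ico (((2 * a : ℝ) + 1) / 2 ^ (k + 1)) (((a : ℝ) + 1) / 2 ^ k) ↔
      ⌊(2:ℝ) ^ (k + 1) * x⌋₊ = 2 * a + 1 := by
    rw [Nat.floor_eq_iff hy, Set.mem_Ico, div_le_iff₀ h2, lt_div_iff₀ h2']
    constructor
    · rintro ⟨hl, hr⟩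
      constructor
      · push_cast; nlinarith
      · push_cast; rw [pow_succ]; nlinarith
    · rintro ⟨hl, hr⟩
      constructor
      · rw [mul_comm]; push_cast at hl ⊢; nlinarith
      · rw [mul_comm]; push_cast at hr ⊢; rw [pow_succ] at hr; nlinarith
  unfold haarFn
  rw [if_congr h1 rfl (if_congr h2i rfl rfl)]

lemma floor_coarse (x : ℝ) (hx : 0 ≤ x) {j k : ℕ} (h : j ≤ k) :
    ⌊(2:ℝ) ^ j * x⌋₊ = ⌊(2:ℝ) ^ k * x⌋₊ / 2 ^ (k - j) := by
  have : (2:ℝ) ^ j * x = (2 ^ k * x) / ((2 ^ (k - j) : ℕ) : ℝ) := by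
    have : (2:ℝ) ^ k = 2 ^ j * 2 ^ (k - j) := by
      rw [← pow_add, Nat.add_sub_cancel' h]
    push_cast
    rw [this]
    field_simp
  rw [this, Nat.floor_div_natCast]

lemma haarFn_self (k : ℕ) (x : ℝ) (hx : 0 ≤ x) :
    haarFn k ⌊(2:ℝ) ^ k * x⌋₊ x = eps k x := by
  rw [haarFn_eq _ _ _ hx]
  set N := ⌊(2:ℝ) ^ (k + 1) * x⌋₊ with hN
  have hfl : ⌊(2:ℝ) ^ k * x⌋₊ = N / 2 := by
    have := floor_coarse x hx (Nat.le_succ k)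
    simpa using this
  rw [hfl]
  unfold eps
  rw [← hN]
  rcases Nat.even_or_odd N with he | ho
  · obtain ⟨m, hm⟩ := he
    have : N % 2 = 0 := by omega
    rw [if_pos this, if_pos (by omega)]
  · obtain ⟨m, hm⟩ := ho
    have h2 : ¬ (N % 2 = 0) := by omega
    rw [if_neg h2, if_neg (by omega), if_pos (by omega)]

lemma haarFn_ne (k a : ℕ) (x : ℝ) (hx : 0 ≤ x) (h : a ≠ ⌊(2:ℝ) ^ k * x⌋₊) :
    haarFn k a x = 0 := by
  rw [haarFn_eq _ _ _ hx]
  have hfl : ⌊(2:ℝ) ^ k * x⌋₊ = ⌊(2:ℝ) ^ (k + 1) * x⌋₊ / 2 := by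
    simpa using floor_coarse x hx (Nat.le_succ k)
  rw [if_neg (by omega), if_neg (by omega)]

lemma haarFn_neg (k a : ℕ) (x : ℝ) (hx : x < 0) : haarFn k a x = 0 := by
  unfold haarFn
  rw [if_neg, if_neg]
  · rintro ⟨h1, -⟩
    exact absurd (le_trans (by positivity) h1) (not_le.2 hx)
  · rintro ⟨h1, -⟩
    exact absurd (le_trans (by positivity) h1) (not_le.2 hx)

lemma floor_ge (k : ℕ) (x : ℝ) (hx : 1 ≤ x) : 2 ^ k ≤ ⌊(2:ℝ) ^ k * x⌋₊ := by
  refine Nat.le_floor ?_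
  push_cast
  nlinarith [pow_pos (by norm_num : (0:ℝ) < 2) k]

lemma pm_mul {a b : ℝ} (ha : a = 1 ∨ a = -1) (hb : b = 1 ∨ b = -1) :
    a * b = 1 ∨ a * b = -1 := by
  rcases ha with h | h <;> rcases hb with h' | h' <;> rw [h, h'] <;> norm_num

lemma haarFn_zero_of_not_mem (k a : ℕ) (x : ℝ) (ha : a < 2 ^ k)
    (hx : x ∉ Set.Ico (0:ℝ) 1) : haarFn k a x = 0 := by
  rw [Set.mem_Ico, not_and_or, not_le, not_lt] at hx
  rcases hx with h | h
  · exact haarFn_neg k a x h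
  · refine haarFn_ne k a x (by linarith) ?_
    have := floor_ge k x h
    omega

lemma rFunction_eval (r : Fin 3 → ℕ) (α : (Fin 3 → ℕ) → ℝ) (x : Fin 3 → ℝ)
    (hx : ∀ t, x t ∈ Set.Ico (0:ℝ) 1) :
    rFunction r α x = α (fun t => ⌊(2:ℝ) ^ (r t) * x t⌋₊) * ∏ t, eps (r t) (x t) := by
  unfold rFunction
  set c : Fin 3 → ℕ := fun t => ⌊(2:ℝ) ^ (r t) * x t⌋₊ with hc
  have hcmem : c ∈ Fintype.piFinset (fun t => Finset.range (2 ^ r t)) := by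
    rw [Fintype.mem_piFinset]
    intro t
    rw [Finset.mem_range]
    have h1 : (2:ℝ) ^ (r t) * x t < 2 ^ (r t) := by
      have := (hx t).2
      nlinarith [pow_pos (by norm_num : (0:ℝ) < 2) (r t)]
    have h0 : (0:ℝ) ≤ 2 ^ (r t) * x t := mul_nonneg (by positivity) (hx t).1
    rw [show c t = ⌊(2:ℝ) ^ (r t) * x t⌋₊ from rfl, Nat.floor_lt h0]
    push_cast
    exact h1
  rw [Finset.sum_eq_single_of_mem c hcmem]
  · congr 1
    unfold haarFn3
    exact Finset.prod_congr rfl fun t _ => haarFn_self (r t) (x t) (hx t).1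
  · intro b _ hb
    have : ∃ t, b t ≠ c t := by
      by_contra hcon
      push_neg at hcon
      exact hb (funext hcon)
    obtain ⟨t, ht⟩ := this
    have : haarFn (r t) (b t) (x t) = 0 := haarFn_ne _ _ _ (hx t).1 ht
    unfold haarFn3
    rw [Finset.prod_eq_zero (Finset.mem_univ t) this, mul_zero]

lemma rFunction_zero (r : Fin 3 → ℕ) (α : (Fin 3 → ℕ) → ℝ) (x : Fin 3 → ℝ)
    (t : Fin 3) (hx : x t ∉ Set.Ico (0:ℝ) 1) : rFunction r α x = 0 := by
  unfold rFunction
  refine Finset.sum_eq_zero fun a ha => ?_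
  rw [Fintype.mem_piFinset] at ha
  have := ha t
  rw [Finset.mem_range] at this
  unfold haarFn3
  rw [Finset.prod_eq_zero (Finset.mem_univ t)
    (haarFn_zero_of_not_mem _ _ _ this hx), mul_zero]

theorem rFunction_product_strongly_distinct (n : ℕ) (r s : Fin 3 → ℕ)
    (hr : r 0 + r 1 + r 2 = n) (hs : s 0 + s 1 + s 2 = n)
    (hsd : ∀ t, r t ≠ s t)
    (α β : (Fin 3 → ℕ) → ℝ) (hα : ∀ a, α a = 1 ∨ α a = -1) (hβ : ∀ a, β a = 1 ∨ β a = -1) :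
    ∃ γ : (Fin 3 → ℕ) → ℝ, (∀ a, γ a = 1 ∨ γ a = -1) ∧
      ∀ x : Fin 3 → ℝ, rFunction r α x * rFunction s β x =
        rFunction (fun t => max (r t) (s t)) γ x := by
  set m : Fin 3 → ℕ := fun t => max (r t) (s t) with hm
  refine ⟨fun c =>
    α (fun t => c t / 2 ^ (m t - r t)) * β (fun t => c t / 2 ^ (m t - s t)) *
      ∏ t, (if (c t / 2 ^ (m t - min (r t) (s t) - 1)) % 2 = 0 then (-1:ℝ) else 1),
    ?_, ?_⟩
  · intro c
    have hp : (∏ t, (if (c t / 2 ^ (m t - min (r t) (s t) - 1)) % 2 = 0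
        then (-1:ℝ) else 1)) = 1 ∨
        (∏ t, (if (c t / 2 ^ (m t - min (r t) (s t) - 1)) % 2 = 0
        then (-1:ℝ) else 1)) = -1 := by
      rw [Fin.prod_univ_three]
      refine pm_mul (pm_mul ?_ ?_) ?_ <;> split <;> norm_num
    exact pm_mul (pm_mul (hα _) (hβ _)) hp
  · intro x
    by_cases hx : ∀ t, x t ∈ Set.Ico (0:ℝ) 1
    · rw [rFunction_eval r α x hx, rFunction_eval s β x hx, rFunction_eval m _ x hx]
      set c : Fin 3 → ℕ := fun t => ⌊(2:ℝ) ^ (m t) * x t⌋₊ with hc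
      have hca : (fun t => c t / 2 ^ (m t - r t)) = fun t => ⌊(2:ℝ) ^ (r t) * x t⌋₊ := by
        funext t
        exact (floor_coarse (x t) (hx t).1 (le_max_left _ _)).symm
      have hcb : (fun t => c t / 2 ^ (m t - s t)) = fun t => ⌊(2:ℝ) ^ (s t) * x t⌋₊ := by
        funext t
        exact (floor_coarse (x t) (hx t).1 (le_max_right _ _)).symm
      have hmin : ∀ t, (if (c t / 2 ^ (m t - min (r t) (s t) - 1)) % 2 = 0
          then (-1:ℝ) else 1) = eps (min (r t) (s t)) (x t) := by
        intro t
        have hlt : min (r t) (s t) + 1 ≤ m t := by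
          have := hsd t
          simp only [hm]
          omega
        unfold eps
        rw [floor_coarse (x t) (hx t).1 hlt]
        have : m t - (min (r t) (s t) + 1) = m t - min (r t) (s t) - 1 := by omega
        rw [this]
      have key : ∀ t, eps (r t) (x t) * eps (s t) (x t) =
          eps (min (r t) (s t)) (x t) * eps (m t) (x t) := by
        intro t
        simp only [hm]
        rcases le_total (r t) (s t) with h | h
        · rw [min_eq_left h, max_eq_right h]
        · rw [min_eq_right h, max_eq_left h, mul_comm]
      rw [hca, hcb]
      have : (∏ t, eps (min (r t) (s t)) (x t)) * ∏ t, eps (m t) (x t) =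
          (∏ t, eps (r t) (x t)) * ∏ t, eps (s t) (x t) := by
        rw [← Finset.prod_mul_distrib, ← Finset.prod_mul_distrib]
        exact Finset.prod_congr rfl fun t _ => (key t).symm
      calc α _ * (∏ t, eps (r t) (x t)) * (β _ * ∏ t, eps (s t) (x t))
          = α _ * β _ * ((∏ t, eps (r t) (x t)) * ∏ t, eps (s t) (x t)) := by ring
        _ = α _ * β _ * ((∏ t, eps (min (r t) (s t)) (x t)) * ∏ t, eps (m t) (x t)) := by
            rw [this]
        _ = α _ * β _ * (∏ t, eps (min (r t) (s t)) (x t)) * ∏ t, eps (m t) (x t) := by ring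
        _ = _ := by
            congr 2
            exact (Finset.prod_congr rfl fun t _ => (hmin t)).symm
    · push_neg at hx
      obtain ⟨t, ht⟩ := hx
      rw [rFunction_zero r α x t ht, rFunction_zero m _ x t ht, zero_mul]
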